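/- Let V be a vector space over a field with countable basis (e_n)_{n∈ℕ}, and let u be an endomorphism of V such that for every n, u(e_n) ≡ e_{n+1} modulo the span of e_0, …, e_n. Then V, viewed as an F[t]-module via t·x = u(x), is free of rank one (generated by e_0). -/

import Mathlib

open Polynomial Module

section Aux

variable {F : Type*} [Field F] {V : Type*} [AddCommGroup V]
    [Module F V] (e : Basis ℕ F V) (u : Module.End F V)
    (hu : ∀ n : ℕ, u (e n) - e (n + 1) ∈
      Submodule.span F (Set.range fun i : Fin (n + 1) => e i))

/-- The span of `e₀, …, e_{n-1}`. -/
private def Sp (n : ℕ) : Submodule F V :=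
  Submodule.span F (Set.range fun i : Fin n => e i)

private lemma Sp_mono {m n : ℕ} (h : m ≤ n) : Sp e m ≤ Sp e n := by
  apply Submodule.span_mono
  rintro x ⟨i, rfl⟩
  exact ⟨⟨i, lt_of_lt_of_le i.2 h⟩, rfl⟩

private lemma e_mem_Sp {i n : ℕ} (h : i < n) : e i ∈ Sp e n :=
  Submodule.subset_span ⟨⟨i, h⟩, rfl⟩

include hu in
private lemma u_map_Sp {n : ℕ} {x : V} (hx : x ∈ Sp e n) : u x ∈ Sp e (n + 1) := by
  induction hx using Submodule.span_induction with
  | mem y hy =>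
    obtain ⟨i, rfl⟩ := hy
    have h1 : u (e i) - e (i + 1) ∈ Sp e (i + 1) := hu i
    have h2 : u (e i) = (u (e i) - e (i + 1)) + e (i + 1) := by abel
    rw [h2]
    exact add_mem (Sp_mono e (Nat.succ_le_succ i.2.le) h1)
      (e_mem_Sp e (Nat.add_lt_add_right i.2 1))
  | zero => simp [map_zero]
  | add y z _ _ hy hz => rw [map_add]; exact add_mem hy hz
  | smul a y _ hy => rw [map_smul]; exact Submodule.smul_mem _ a hy

include hu in
private lemma pow_sub_mem (n : ℕ) : (u ^ n) (e 0) - e n ∈ Sp e n := by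
  induction n with
  | zero => simp
  | succ n ih =>
    have key : (u ^ (n + 1)) (e 0) - e (n + 1)
        = u ((u ^ n) (e 0) - e n) + (u (e n) - e (n + 1)) := by
      rw [pow_succ', Module.End.mul_apply, map_sub]
      abel
    rw [key]
    exact add_mem (u_map_Sp e u hu ih) (hu n)

include hu in
private lemma e_mem_span_pows (n : ℕ) :
    e n ∈ Submodule.span F (Set.range fun k : ℕ => (u ^ k) (e 0)) := by
  induction n using Nat.strong_induction_on with
  | _ n ih =>
    have h1 : e n = (u ^ n) (e 0) - ((u ^ n) (e 0) - e n) := by abel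
    rw [h1]
    refine sub_mem (Submodule.subset_span ⟨n, rfl⟩) ?_
    have h2 : Sp e n ≤ Submodule.span F (Set.range fun k : ℕ => (u ^ k) (e 0)) := by
      rw [Sp, Submodule.span_le]
      rintro x ⟨i, rfl⟩
      exact ih i i.2
    exact h2 (pow_sub_mem e u hu n)

include hu in
private lemma aeval_ne_zero {p : F[X]} (hp : p ≠ 0) : (aeval u p) (e 0) ≠ 0 := by
  intro h0
  set d := p.natDegree with hd
  -- the coordinate functional at index d
  set f : V →ₗ[F] F := (Finsupp.lapply d).comp (e.repr : V →ₗ[F] (ℕ →₀ F)) with hf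
  have hfS : ∀ x ∈ Sp e d, f x = 0 := by
    intro x hx
    have : Sp e d ≤ LinearMap.ker f := by
      rw [Sp, Submodule.span_le]
      rintro y ⟨i, rfl⟩
      simp only [SetLike.mem_coe, LinearMap.mem_ker, hf, LinearMap.comp_apply,
        LinearEquiv.coe_coe, Basis.repr_self, Finsupp.lapply_apply]
      exact Finsupp.single_eq_of_ne' (Nat.ne_of_lt i.2)
    exact this hx
  have hfe : ∀ i : ℕ, f (e i) = if i = d then 1 else 0 := by
    intro i
    simp only [hf, LinearMap.comp_apply, LinearEquiv.coe_coe, Basis.repr_self,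
      Finsupp.lapply_apply]
    exact Finsupp.single_apply
  have hfp : ∀ i ≤ d, f ((u ^ i) (e 0)) = if i = d then 1 else 0 := by
    intro i hi
    have : (u ^ i) (e 0) = e i + ((u ^ i) (e 0) - e i) := by abel
    rw [this, map_add, hfS _ (Sp_mono e hi (pow_sub_mem e u hu i)), add_zero, hfe]
  have hsum : (aeval u p) (e 0)
      = ∑ i ∈ Finset.range (d + 1), p.coeff i • (u ^ i) (e 0) := by
    rw [aeval_eq_sum_range]
    simp [LinearMap.smul_apply]
    rfl
  have : f ((aeval u p) (e 0)) = p.coeff d := by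
    rw [hsum, map_sum]
    rw [Finset.sum_eq_single d]
    · rw [map_smul, hfp d le_rfl, if_pos rfl, smul_eq_mul, mul_one]
    · intro i hi hne
      rw [map_smul, hfp i (Nat.lt_succ_iff.mp (Finset.mem_range.mp hi)), if_neg hne,
        smul_eq_mul, mul_zero]
    · intro h; exact absurd (Finset.self_mem_range_succ d) h
  rw [h0, map_zero] at this
  exact hp (Polynomial.leadingCoeff_eq_zero.mp this.symm)

end Aux

/-- If `(eₙ)` is a basis of `V` and `u (eₙ) ≡ e_{n+1}` modulo the span of
`e₀, …, eₙ` for every `n`, then `V`, viewed as an `F[t]`-module where `t` acts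
as `u`, is free of rank one, generated by `e₀`. -/
theorem free_rank_one_of_iterates (F : Type*) [Field F] (V : Type*) [AddCommGroup V]
    [Module F V] (e : Basis ℕ F V) (u : Module.End F V)
    (hu : ∀ n : ℕ, u (e n) - e (n + 1) ∈
      Submodule.span F (Set.range fun i : Fin (n + 1) => e i)) :
    ∃ b : Basis (Fin 1) (Polynomial F) (Module.AEval' u),
      b 0 = Module.AEval'.of u (e 0) := by
  set b0 : Module.AEval' u := Module.AEval'.of u (e 0) with hb0
  -- linear independence of the single vector b0
  have hli : LinearIndependent F[X] (fun _ : Fin 1 => b0) := by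
    rw [Fintype.linearIndependent_iff]
    intro g hg i
    fin_cases i
    simp only [Fin.sum_univ_one] at hg
    by_contra hne
    apply aeval_ne_zero e u hu hne
    have : g 0 • b0 = Module.AEval'.of u ((aeval u (g 0)) (e 0)) := by
      rw [hb0, ← Module.AEval.of_aeval_smul]
      rfl
    rw [this] at hg
    exact (Module.AEval'.of u).injective (by simpa using hg)
  -- spanning
  have hspan : ⊤ ≤ Submodule.span F[X] (Set.range fun _ : Fin 1 => b0) := by
    set T := Submodule.span F[X] (Set.range fun _ : Fin 1 => b0) with hT
    intro x _
    have hpow : ∀ k : ℕ, Module.AEval'.of u ((u ^ k) (e 0)) ∈ T := by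
      intro k
      have : Module.AEval'.of u ((u ^ k) (e 0)) = (X : F[X]) ^ k • b0 := by
        rw [hb0, ← Module.AEval.of_aeval_smul]
        simp
      rw [this]
      exact Submodule.smul_mem _ _ (Submodule.subset_span ⟨0, rfl⟩)
    have hTF : ∀ v : V, v ∈ Submodule.span F (Set.range fun k : ℕ => (u ^ k) (e 0)) →
        Module.AEval'.of u v ∈ T := by
      intro v hv
      induction hv using Submodule.span_induction with
      | mem y hy => obtain ⟨k, rfl⟩ := hy; exact hpow k
      | zero => simp only [map_zero]; exact zero_mem _
      | add y z _ _ hy hz => rw [map_add]; exact add_mem hy hz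
      | smul a y _ hy =>
        rw [map_smul]
        have : a • (Module.AEval'.of u y) = (C a : F[X]) • (Module.AEval'.of u y) :=
          (Module.AEval.C_smul _ _ _).symm
        rw [this]
        exact Submodule.smul_mem _ _ hy
    have hVe : ∀ n : ℕ, Module.AEval'.of u (e n) ∈ T := fun n =>
      hTF _ (e_mem_span_pows e u hu n)
    -- every element of V is in the F-span of the basis
    have hTe : ∀ v : V, v ∈ Submodule.span F (Set.range e) →
        Module.AEval'.of u v ∈ T := by
      intro v hv
      induction hv using Submodule.span_induction with
      | mem y hy => obtain ⟨n, rfl⟩ := hy; exact hVe n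
      | zero => simp only [map_zero]; exact zero_mem _
      | add y z _ _ hy hz => rw [map_add]; exact add_mem hy hz
      | smul a y _ hy =>
        rw [map_smul]
        have : a • (Module.AEval'.of u y) = (C a : F[X]) • (Module.AEval'.of u y) :=
          (Module.AEval.C_smul _ _ _).symm
        rw [this]
        exact Submodule.smul_mem _ _ hy
    have hmem : (Module.AEval'.of u).symm x ∈ Submodule.span F (Set.range e) := by
      rw [e.span_eq]; trivial
    have hx := hTe _ hmem
    simpa using hx
  exact ⟨Basis.mk hli hspan, Basis.mk_apply hli hspan 0⟩
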